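/- Let O ⊆ [K], let i ∈ [K]∖O, let w ∈ ℝ^K have nonnegative entries, let μ ∈ (ℝ^d)^K, and assume P ≠ ∅. Define Alt_i⁺(O) := {λ ∈ (ℝ^d)^K : λ_i ∈ P and ∀ j ∈ O, ¬(λ_i ≺ λ_j)}. Then inf_{λ ∈ Alt_i⁺(O)} Σ_{k∈[K]} (1/2) w_k ‖μ_k − λ_k‖₂² = inf_{λ ∈ P} [ (1/2) w_i ‖μ_i − λ‖₂² + Σ_{j∈O} (1/2) w_j min_{c∈[d]} (max(μ_j^c − λ^c, 0))² ]. -/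

import Mathlib

noncomputable section

abbrev Evec (d : ℕ) := EuclideanSpace ℝ (Fin d)

def Pdom {d : ℕ} (x y : Evec d) : Prop := (∀ c, x c ≤ y c) ∧ x ≠ y

def PolySet {d m : ℕ} (A : Fin m → Fin d → ℝ) (bvec : Fin m → ℝ) : Set (Evec d) :=
  {x | ∀ j, ∑ c, A j c * x c ≤ bvec j}

lemma normsq_eval {d : ℕ} (x : Evec d) : ‖x‖^2 = ∑ c, (x c)^2 := by
  rw [EuclideanSpace.norm_eq, Real.sq_sqrt (by positivity)]
  simp [sq_abs]

lemma max_sq_le {x y : ℝ} (h : x ≤ y) : (max x 0)^2 ≤ y^2 := by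
  have h1 : max x 0 ≤ |y| := max_le (h.trans (le_abs_self y)) (abs_nonneg y)
  calc (max x 0)^2 ≤ |y|^2 := by
        exact pow_le_pow_left₀ (le_max_right x 0) h1 2
    _ = y^2 := sq_abs y

/-- the transportation cost to `Alt_i⁺(O)` equals the value of the
reduced optimization problem over points `λ ∈ P`. -/
theorem stmt3 {K d m : ℕ} (hK : 0 < K) (hd : 0 < d) (hm : 0 < m)
    (A : Fin m → Fin d → ℝ) (bvec : Fin m → ℝ)
    (O : Finset (Fin K)) (i : Fin K) (hi : i ∉ O)
    (w : Fin K → ℝ) (hw : ∀ k, 0 ≤ w k)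
    (μ : Fin K → Evec d)
    (hP : (PolySet A bvec).Nonempty) :
    sInf {v : ℝ | ∃ lam : Fin K → Evec d,
        (lam i ∈ PolySet A bvec ∧ ∀ j ∈ O, ¬ Pdom (lam i) (lam j)) ∧
        v = ∑ k, (1/2 : ℝ) * w k * ‖μ k - lam k‖^2} =
    sInf {v : ℝ | ∃ lam ∈ PolySet A bvec,
        v = (1/2 : ℝ) * w i * ‖μ i - lam‖^2 +
          ∑ j ∈ O, (1/2 : ℝ) * w j * ⨅ c, (max (μ j c - lam c) 0)^2} := by
  classical
  haveI : Nonempty (Fin d) := ⟨⟨0, hd⟩⟩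
  obtain ⟨p0, hp0⟩ := hP
  set L : Set ℝ := {v : ℝ | ∃ lam : Fin K → Evec d,
      (lam i ∈ PolySet A bvec ∧ ∀ j ∈ O, ¬ Pdom (lam i) (lam j)) ∧
      v = ∑ k, (1/2 : ℝ) * w k * ‖μ k - lam k‖^2} with hL
  set R : Set ℝ := {v : ℝ | ∃ lam ∈ PolySet A bvec,
      v = (1/2 : ℝ) * w i * ‖μ i - lam‖^2 +
        ∑ j ∈ O, (1/2 : ℝ) * w j * ⨅ c, (max (μ j c - lam c) 0)^2} with hR
  have hginf : ∀ (lam : Evec d) (j : Fin K), 0 ≤ ⨅ c, (max (μ j c - lam c) 0)^2 :=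
    fun lam j => Real.iInf_nonneg (fun c => sq_nonneg _)
  have hLbdd : BddBelow L := by
    refine ⟨0, ?_⟩
    rintro v ⟨lam, _, rfl⟩
    exact Finset.sum_nonneg fun k _ =>
      mul_nonneg (mul_nonneg (by norm_num) (hw k)) (sq_nonneg _)
  have hRbdd : BddBelow R := by
    refine ⟨0, ?_⟩
    rintro v ⟨lam, _, rfl⟩
    have h1 : (0:ℝ) ≤ (1/2 : ℝ) * w i * ‖μ i - lam‖^2 :=
      mul_nonneg (mul_nonneg (by norm_num) (hw i)) (sq_nonneg _)
    have h2 : (0:ℝ) ≤ ∑ j ∈ O, (1/2 : ℝ) * w j * ⨅ c, (max (μ j c - lam c) 0)^2 :=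
      Finset.sum_nonneg fun j _ =>
        mul_nonneg (mul_nonneg (by norm_num) (hw j)) (hginf lam j)
    linarith
  have hLne : L.Nonempty := by
    refine ⟨∑ k, (1/2 : ℝ) * w k * ‖μ k - p0‖^2, fun _ => p0, ⟨hp0, ?_⟩, rfl⟩
    intro j _ hpd
    exact hpd.2 rfl
  have hRne : R.Nonempty :=
    ⟨_, p0, hp0, rfl⟩
  apply le_antisymm
  · -- sInf L ≤ sInf R
    apply le_csInf hRne
    rintro v ⟨lam0, hlam0, rfl⟩
    -- minimizing coordinates
    have hmin : ∀ j : Fin K, ∃ c0 : Fin d,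
        (⨅ c, (max (μ j c - lam0 c) 0)^2) = (max (μ j c0 - lam0 c0) 0)^2 ∧
        ∀ c, (max (μ j c0 - lam0 c0) 0)^2 ≤ (max (μ j c - lam0 c) 0)^2 := by
      intro j
      obtain ⟨c0, hc0⟩ := Finite.exists_min (fun c => (max (μ j c - lam0 c) 0)^2)
      exact ⟨c0, le_antisymm (ciInf_le (Finite.bddBelow_range _) c0) (le_ciInf hc0), hc0⟩
    set cj : Fin K → Fin d := fun j => (hmin j).choose with hcj
    set mj : Fin K → ℝ := fun j => max (μ j (cj j) - lam0 (cj j)) 0 with hmj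
    set lamδ : ℝ → Fin K → Evec d := fun δ k =>
      if k = i then lam0 else
      if k ∈ O then μ k - EuclideanSpace.single (cj k) (mj k + δ) else μ k with hlamδ
    have hcost : ∀ δ : ℝ, (∑ k, (1/2 : ℝ) * w k * ‖μ k - lamδ δ k‖^2) =
        (1/2 : ℝ) * w i * ‖μ i - lam0‖^2 + ∑ j ∈ O, (1/2 : ℝ) * w j * (mj j + δ)^2 := by
      intro δ
      have hsub : (insert i O : Finset (Fin K)) ⊆ Finset.univ := Finset.subset_univ _
      rw [← Finset.sum_subset hsub]
      · rw [Finset.sum_insert hi]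
        have h1 : lamδ δ i = lam0 := by simp [hlamδ]
        congr 1
        · rw [h1]
        · apply Finset.sum_congr rfl
          intro j hj
          have hji : j ≠ i := fun h => hi (h ▸ hj)
          have h2 : lamδ δ j = μ j - EuclideanSpace.single (cj j) (mj j + δ) := by
            simp [hlamδ, hji, hj]
          rw [h2]
          have : μ j - (μ j - EuclideanSpace.single (cj j) (mj j + δ)) =
              EuclideanSpace.single (cj j) (mj j + δ) := by abel
          rw [this, EuclideanSpace.norm_single, Real.norm_eq_abs, sq_abs]
      · intro k _ hk
        have hki : k ≠ i := fun h => hk (h ▸ Finset.mem_insert_self i O)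
        have hkO : k ∉ O := fun h => hk (Finset.mem_insert_of_mem h)
        have : lamδ δ k = μ k := by simp [hlamδ, hki, hkO]
        simp [this]
    have hmem : ∀ δ : ℝ, 0 < δ → (∑ k, (1/2 : ℝ) * w k * ‖μ k - lamδ δ k‖^2) ∈ L := by
      intro δ hδ
      refine ⟨lamδ δ, ⟨?_, ?_⟩, rfl⟩
      · have : lamδ δ i = lam0 := by simp [hlamδ]
        rw [this]; exact hlam0
      · intro j hj hpd
        have hji : j ≠ i := fun h => hi (h ▸ hj)
        have h2 : lamδ δ j = μ j - EuclideanSpace.single (cj j) (mj j + δ) := by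
          simp [hlamδ, hji, hj]
        have h1 : lamδ δ i = lam0 := by simp [hlamδ]
        have hle := hpd.1 (cj j)
        rw [h1, h2] at hle
        have hev : (μ j - EuclideanSpace.single (cj j) (mj j + δ)) (cj j) =
            μ j (cj j) - (mj j + δ) := by
          simp [EuclideanSpace.single_apply]
        rw [hev] at hle
        have : μ j (cj j) - mj j ≤ lam0 (cj j) := by
          have := le_max_left (μ j (cj j) - lam0 (cj j)) 0
          simp only [hmj] at *
          linarith
        linarith
    have htend : Filter.Tendsto
        (fun δ : ℝ => (1/2 : ℝ) * w i * ‖μ i - lam0‖^2 + ∑ j ∈ O, (1/2 : ℝ) * w j * (mj j + δ)^2)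
        (nhdsWithin 0 (Set.Ioi 0))
        (nhds ((1/2 : ℝ) * w i * ‖μ i - lam0‖^2 + ∑ j ∈ O, (1/2 : ℝ) * w j * (mj j)^2)) := by
      have hcont : Continuous (fun δ : ℝ =>
          (1/2 : ℝ) * w i * ‖μ i - lam0‖^2 + ∑ j ∈ O, (1/2 : ℝ) * w j * (mj j + δ)^2) := by
        apply Continuous.add continuous_const
        apply continuous_finset_sum
        intro j _
        exact continuous_const.mul ((continuous_const.add continuous_id).pow 2)
      have := (hcont.tendsto 0).mono_left (nhdsWithin_le_nhds (s := Set.Ioi (0:ℝ)))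
      simpa using this
    have hfin : (1/2 : ℝ) * w i * ‖μ i - lam0‖^2 + ∑ j ∈ O, (1/2 : ℝ) * w j * (mj j)^2 =
        (1/2 : ℝ) * w i * ‖μ i - lam0‖^2 +
          ∑ j ∈ O, (1/2 : ℝ) * w j * ⨅ c, (max (μ j c - lam0 c) 0)^2 := by
      congr 1
      apply Finset.sum_congr rfl
      intro j _
      rw [(hmin j).choose_spec.1]
    rw [← hfin]
    refine ge_of_tendsto htend ?_
    filter_upwards [self_mem_nhdsWithin] with δ (hδ : δ ∈ Set.Ioi (0:ℝ))
    rw [← hcost δ]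
    exact csInf_le hLbdd (hmem δ hδ)
  · -- sInf R ≤ sInf L
    apply le_csInf hLne
    rintro v ⟨lam, ⟨hmemP, hnd⟩, rfl⟩
    have hRmem : ((1/2 : ℝ) * w i * ‖μ i - lam i‖^2 +
        ∑ j ∈ O, (1/2 : ℝ) * w j * ⨅ c, (max (μ j c - lam i c) 0)^2) ∈ R :=
      ⟨lam i, hmemP, rfl⟩
    refine (csInf_le hRbdd hRmem).trans ?_
    -- reduced value ≤ full cost
    have key : ∀ j ∈ O, (⨅ c, (max (μ j c - lam i c) 0)^2) ≤ ‖μ j - lam j‖^2 := by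
      intro j hj
      have hnd' := hnd j hj
      rw [Pdom] at hnd'
      push_neg at hnd'
      by_cases hall : ∀ c, lam i c ≤ lam j c
      · have heq := hnd' hall
        rw [← heq, normsq_eval]
        calc (⨅ c, (max (μ j c - lam i c) 0)^2)
            ≤ (max (μ j (Classical.arbitrary (Fin d)) - lam i (Classical.arbitrary (Fin d))) 0)^2 :=
              ciInf_le (Finite.bddBelow_range _) _
          _ ≤ (μ j (Classical.arbitrary (Fin d)) - lam i (Classical.arbitrary (Fin d)))^2 :=
              max_sq_le le_rfl
          _ ≤ ∑ c, ((μ j - lam i) c)^2 := by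
              have := Finset.single_le_sum (f := fun c => ((μ j - lam i) c)^2)
                (fun c _ => sq_nonneg _) (Finset.mem_univ (Classical.arbitrary (Fin d)))
              simpa using this
      · push_neg at hall
        obtain ⟨c, hc⟩ := hall
        rw [normsq_eval]
        calc (⨅ c, (max (μ j c - lam i c) 0)^2)
            ≤ (max (μ j c - lam i c) 0)^2 := ciInf_le (Finite.bddBelow_range _) _
          _ ≤ (μ j c - lam j c)^2 := max_sq_le (by linarith)
          _ ≤ ∑ c, ((μ j - lam j) c)^2 := by
              have := Finset.single_le_sum (f := fun c => ((μ j - lam j) c)^2)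
                (fun c _ => sq_nonneg _) (Finset.mem_univ c)
              simpa using this
    have h1 : (insert i O : Finset (Fin K)) ⊆ Finset.univ := Finset.subset_univ _
    calc (1/2 : ℝ) * w i * ‖μ i - lam i‖^2 +
        ∑ j ∈ O, (1/2 : ℝ) * w j * ⨅ c, (max (μ j c - lam i c) 0)^2
        ≤ (1/2 : ℝ) * w i * ‖μ i - lam i‖^2 +
          ∑ j ∈ O, (1/2 : ℝ) * w j * ‖μ j - lam j‖^2 := by
          apply add_le_add_right
          apply Finset.sum_le_sum
          intro j hj
          exact mul_le_mul_of_nonneg_left (key j hj)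
            (mul_nonneg (by norm_num) (hw j))
      _ = ∑ k ∈ insert i O, (1/2 : ℝ) * w k * ‖μ k - lam k‖^2 := by
          rw [Finset.sum_insert hi]
      _ ≤ ∑ k, (1/2 : ℝ) * w k * ‖μ k - lam k‖^2 := by
          apply Finset.sum_le_sum_of_subset_of_nonneg h1
          intro k _ _
          exact mul_nonneg (mul_nonneg (by norm_num) (hw k)) (sq_nonneg _)
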